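/- Sine modulation theorem for the OFT: for integrable u : ℝ³ → 𝕆 and f₀ ∈ ℝ, the OFT of x ↦ u(x)·sin(2πf₀x₁) at (f₁,f₂,f₃) equals (U(f₁+f₀,−f₂,−f₃) − U(f₁−f₀,−f₂,−f₃))·(e₁/2), where U is the OFT of u. -/

import Mathlib

noncomputable section
open MeasureTheory Real

/-- Octonions as the Cayley–Dickson double of the quaternions:
pairs of quaternions with the Cayley–Dickson product `omul`.
(The additive, scalar and topological structure is the product structure.) -/
abbrev Octonion : Type := Quaternion ℝ × Quaternion ℝ

/-- Cayley–Dickson multiplication of octonions. -/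
def omul (x y : Octonion) : Octonion :=
  (x.1 * y.1 - star y.2 * x.2, y.2 * x.1 + x.2 * star y.1)

/-- The octonion `1`. -/
def oone : Octonion := (1, 0)

/-- Octonion conjugation. -/
def oconj (x : Octonion) : Octonion := (star x.1, -x.2)

/-- Real part of an octonion. -/
def ore (x : Octonion) : ℝ := x.1.re

/-- `o · o*`, as a real number (its imaginary part vanishes). -/
def onormSq (x : Octonion) : ℝ := ore (omul x (oconj x))

/-- The octonion norm `|o| = √(o·o*)`. -/
def oabs (x : Octonion) : ℝ := Real.sqrt (onormSq x)

/-- Inverse of a (nonzero) octonion. -/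
def oinv (x : Octonion) : Octonion := (onormSq x)⁻¹ • oconj x

def e1 : Octonion := ((⟨0,1,0,0⟩ : Quaternion ℝ), 0)
def e2 : Octonion := ((⟨0,0,1,0⟩ : Quaternion ℝ), 0)
def e3 : Octonion := ((⟨0,0,0,1⟩ : Quaternion ℝ), 0)
def e4 : Octonion := (0, (⟨1,0,0,0⟩ : Quaternion ℝ))
def e5 : Octonion := (0, (⟨0,1,0,0⟩ : Quaternion ℝ))
def e6 : Octonion := (0, (⟨0,0,1,0⟩ : Quaternion ℝ))
def e7 : Octonion := (0, (⟨0,0,0,1⟩ : Quaternion ℝ))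

/-- Powers of an octonion (well defined since octonions are power-associative). -/
def opow (o : Octonion) : ℕ → Octonion
  | 0 => oone
  | n + 1 => omul o (opow o n)

/-- The octonion exponential `exp o = ∑ oᵏ/k!`. -/
def octExp (o : Octonion) : Octonion :=
  ∑' k : ℕ, ((k.factorial : ℝ)⁻¹) • opow o k

/-- The octonion Fourier transform of `u : ℝ³ → 𝕆`,
with octonion products evaluated left to right. -/
def OFT (u : ℝ × ℝ × ℝ → Octonion) (f : ℝ × ℝ × ℝ) : Octonion :=
  ∫ x : ℝ × ℝ × ℝ,
    omul (omul (omul (u x) (octExp ((-(2 * π * f.1 * x.1)) • e1)))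
        (octExp ((-(2 * π * f.2.1 * x.2.1)) • e2)))
      (octExp ((-(2 * π * f.2.2 * x.2.2)) • e4))

def qmk (a b c d : ℝ) : Quaternion ℝ := ⟨a,b,c,d⟩

lemma qmk_eq (a b c d : ℝ) : (⟨a,b,c,d⟩ : QuaternionAlgebra ℝ (-1) 0 (-1)) = qmk a b c d := rfl

@[simp] lemma qmk_re (a b c d : ℝ) : (qmk a b c d).re = a := rfl
@[simp] lemma qmk_imI (a b c d : ℝ) : (qmk a b c d).imI = b := rfl
@[simp] lemma qmk_imJ (a b c d : ℝ) : (qmk a b c d).imJ = c := rfl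
@[simp] lemma qmk_imK (a b c d : ℝ) : (qmk a b c d).imK = d := rfl

/-! ### Auxiliary lemmas -/

lemma omul_smul_left (a : ℝ) (x y : Octonion) : omul (a • x) y = a • omul x y := by
  simp [omul, Prod.smul_def, smul_sub, smul_add, mul_smul_comm, smul_mul_assoc]

lemma omul_smul_right (a : ℝ) (x y : Octonion) : omul x (a • y) = a • omul x y := by
  simp [omul, Prod.smul_def, smul_sub, smul_add, mul_smul_comm, smul_mul_assoc]

lemma omul_oone (x : Octonion) : omul x oone = x := by simp [omul, oone]

lemma oone_omul (x : Octonion) : omul oone x = x := by simp [omul, oone]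

lemma omul_add_left (x y z : Octonion) : omul (x + y) z = omul x z + omul y z := by
  simp only [omul, Prod.fst_add, Prod.snd_add, Prod.mk_add_mk, Prod.mk.injEq]
  constructor <;> noncomm_ring

lemma omul_sub_left (x y z : Octonion) : omul (x - y) z = omul x z - omul y z := by
  simp only [omul, Prod.fst_sub, Prod.snd_sub, Prod.mk_sub_mk, Prod.mk.injEq]
  constructor <;> noncomm_ring

lemma e1_sq : omul e1 e1 = -oone := by
  simp only [omul, e1, oone, Prod.mk.injEq, Prod.neg_mk]
  constructor
  · ext <;> simp [Quaternion.ext_iff, qmk_eq, Quaternion.re_one, Quaternion.imI_one, Quaternion.imJ_one, Quaternion.imK_one]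
  · simp [qmk_eq]

lemma e2_sq : omul e2 e2 = -oone := by
  simp only [omul, e2, oone, Prod.mk.injEq, Prod.neg_mk]
  constructor
  · ext <;> simp [Quaternion.ext_iff, qmk_eq, Quaternion.re_one, Quaternion.imI_one, Quaternion.imJ_one, Quaternion.imK_one]
  · simp [qmk_eq]

lemma e4_sq : omul e4 e4 = -oone := by
  simp only [omul, e4, oone, Prod.mk.injEq, Prod.neg_mk]
  constructor
  · ext <;> simp [Quaternion.ext_iff, qmk_eq, Quaternion.re_one, Quaternion.imI_one, Quaternion.imJ_one, Quaternion.imK_one]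
  · simp [qmk_eq]

lemma opow_even_odd {e : Octonion} (he : omul e e = -oone) (m : ℕ) :
    opow e (2*m) = ((-1:ℝ)^m) • oone ∧ opow e (2*m+1) = ((-1:ℝ)^m) • e := by
  induction m with
  | zero => simp [opow, oone_omul, omul_oone]
  | succ m ih =>
    have h1 : opow e (2*(m+1)) = omul e (opow e (2*m+1)) := by
      have : 2*(m+1) = (2*m+1)+1 := by ring
      rw [this]; rfl
    have h2 : opow e (2*(m+1)+1) = omul e (opow e (2*(m+1))) := rfl
    constructor
    · rw [h1, ih.2, omul_smul_right, he]
      rw [pow_succ]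
      module
    · rw [h2, h1, ih.2, omul_smul_right, he, omul_smul_right]
      have : omul e (-oone) = -e := by
        have := omul_smul_right (-1 : ℝ) e oone
        simpa [omul_oone] using this
      rw [this, pow_succ]
      module

lemma opow_smul (t : ℝ) (e : Octonion) (k : ℕ) : opow (t • e) k = t^k • opow e k := by
  induction k with
  | zero => simp [opow]
  | succ k ih =>
    rw [show opow (t•e) (k+1) = omul (t•e) (opow (t•e) k) from rfl, ih,
      omul_smul_left, omul_smul_right, smul_smul,
      show opow e (k+1) = omul e (opow e k) from rfl, pow_succ, mul_comm]

/-- The basic exponential factor appearing in the OFT. -/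
def Efac (e : Octonion) (t : ℝ) : Octonion := Real.cos t • oone + Real.sin t • e

lemma octExp_eq_Efac {e : Octonion} (he : omul e e = -oone) (t : ℝ) :
    octExp (t • e) = Efac e t := by
  have hs : HasSum (fun k : ℕ => ((k.factorial : ℝ)⁻¹) • opow (t • e) k)
      (Real.cos t • oone + Real.sin t • e) := by
    refine HasSum.even_add_odd ?_ ?_
    · have : ∀ m : ℕ, (((2*m).factorial : ℝ)⁻¹) • opow (t • e) (2*m)
          = ((-1:ℝ)^m * t^(2*m) / ((2*m).factorial : ℝ)) • oone := by
        intro m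
        rw [opow_smul, (opow_even_odd he m).1]
        rw [smul_smul, smul_smul]
        ring_nf
      simp_rw [this]
      exact (Real.hasSum_cos t).smul_const oone
    · have : ∀ m : ℕ, (((2*m+1).factorial : ℝ)⁻¹) • opow (t • e) (2*m+1)
          = ((-1:ℝ)^m * t^(2*m+1) / ((2*m+1).factorial : ℝ)) • e := by
        intro m
        rw [opow_smul, (opow_even_odd he m).2]
        rw [smul_smul, smul_smul]
        ring_nf
      simp_rw [this]
      exact (Real.hasSum_sin t).smul_const e
  exact hs.tsum_eq

set_option maxHeartbeats 2000000 in
/-- The key pointwise algebraic identity behind sine modulation. -/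
lemma key (o : Octonion) (s t p q : ℝ) :
    omul (omul (omul ((Real.sin s) • o) (Efac e1 t)) (Efac e2 p)) (Efac e4 q)
    = (2:ℝ)⁻¹ • omul (
        omul (omul (omul o (Efac e1 (t-s))) (Efac e2 (-p))) (Efac e4 (-q))
        - omul (omul (omul o (Efac e1 (t+s))) (Efac e2 (-p))) (Efac e4 (-q))) e1 := by
  obtain ⟨⟨a, b, c, d⟩, ⟨w, x, y, z⟩⟩ := o
  simp only [Efac, omul, oone, e1, e2, e4, qmk_eq, cos_sub, cos_add, sin_sub, sin_add, cos_neg, sin_neg]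
  refine Prod.ext ?_ ?_ <;>
    · ext <;>
      · simp [Quaternion.ext_iff, Prod.smul_def, mul_sub, sub_mul, mul_add, add_mul, Quaternion.re_one]
        ring

lemma continuous_omul : Continuous fun p : Octonion × Octonion => omul p.1 p.2 := by
  unfold omul; fun_prop

lemma norm_omul_le (x y : Octonion) : ‖omul x y‖ ≤ 2 * ‖x‖ * ‖y‖ := by
  have h1 : ‖x.1‖ ≤ ‖x‖ := norm_fst_le x
  have h2 : ‖x.2‖ ≤ ‖x‖ := norm_snd_le x
  have h3 : ‖y.1‖ ≤ ‖y‖ := norm_fst_le y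
  have h4 : ‖y.2‖ ≤ ‖y‖ := norm_snd_le y
  rw [omul, Prod.norm_def]
  refine max_le ?_ ?_
  · calc ‖x.1 * y.1 - star y.2 * x.2‖ ≤ ‖x.1 * y.1‖ + ‖star y.2 * x.2‖ := norm_sub_le _ _
      _ ≤ ‖x.1‖ * ‖y.1‖ + ‖star y.2‖ * ‖x.2‖ := by
          gcongr <;> exact norm_mul_le _ _
      _ ≤ ‖x‖ * ‖y‖ + ‖y‖ * ‖x‖ := by rw [norm_star]; gcongr
      _ = 2 * ‖x‖ * ‖y‖ := by ring
  · calc ‖y.2 * x.1 + x.2 * star y.1‖ ≤ ‖y.2 * x.1‖ + ‖x.2 * star y.1‖ := norm_add_le _ _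
      _ ≤ ‖y.2‖ * ‖x.1‖ + ‖x.2‖ * ‖star y.1‖ := by
          gcongr <;> exact norm_mul_le _ _
      _ ≤ ‖y‖ * ‖x‖ + ‖x‖ * ‖y‖ := by rw [norm_star]; gcongr
      _ = 2 * ‖x‖ * ‖y‖ := by ring

lemma norm_oone : ‖oone‖ = 1 := by
  rw [oone, Prod.norm_def]; simp

def qu1 : Quaternion ℝ := ⟨0,1,0,0⟩
def qu2 : Quaternion ℝ := ⟨0,0,1,0⟩
def qu4 : Quaternion ℝ := ⟨1,0,0,0⟩

lemma norm_qu (q : Quaternion ℝ) (h : Quaternion.normSq q = 1) : ‖q‖ = 1 := by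
  rw [Quaternion.normSq_eq_norm_mul_self] at h
  nlinarith [norm_nonneg q]

lemma norm_e1 : ‖e1‖ = 1 := by
  have hq : ‖qu1‖ = 1 := norm_qu _ (by rw [Quaternion.normSq_def']; norm_num [qu1])
  show max ‖qu1‖ ‖(0 : Quaternion ℝ)‖ = 1
  rw [hq, norm_zero]; simp

lemma norm_e2 : ‖e2‖ = 1 := by
  have hq : ‖qu2‖ = 1 := norm_qu _ (by rw [Quaternion.normSq_def']; norm_num [qu2])
  show max ‖qu2‖ ‖(0 : Quaternion ℝ)‖ = 1
  rw [hq, norm_zero]; simp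

lemma norm_e4 : ‖e4‖ = 1 := by
  have hq : ‖qu4‖ = 1 := norm_qu _ (by rw [Quaternion.normSq_def']; norm_num [qu4])
  show max ‖(0 : Quaternion ℝ)‖ ‖qu4‖ = 1
  rw [hq, norm_zero]; simp

lemma norm_Efac_le {e : Octonion} (he : ‖e‖ = 1) (t : ℝ) : ‖Efac e t‖ ≤ 2 := by
  calc ‖Efac e t‖ ≤ ‖Real.cos t • oone‖ + ‖Real.sin t • e‖ := norm_add_le _ _
    _ = |Real.cos t| * ‖oone‖ + |Real.sin t| * ‖e‖ := by
        simp [norm_smul, Real.norm_eq_abs]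
    _ ≤ 1 * 1 + 1 * 1 := by
        rw [norm_oone, he]
        gcongr <;> first | exact Real.abs_cos_le_one t | exact Real.abs_sin_le_one t
    _ = 2 := by norm_num

lemma continuous_Efac (e : Octonion) : Continuous (Efac e) := by
  unfold Efac; fun_prop

lemma omul_comp_aesm {v g : ℝ × ℝ × ℝ → Octonion}
    (hv : AEStronglyMeasurable v (volume : Measure (ℝ×ℝ×ℝ))) (hg : Continuous g) :
    AEStronglyMeasurable (fun x => omul (v x) (g x)) volume :=
  Continuous.comp_aestronglyMeasurable₂ (g := omul) continuous_omul hv hg.aestronglyMeasurable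

lemma integrable_triple {u : ℝ × ℝ × ℝ → Octonion} (hu : Integrable u)
    (g1 g2 g3 : ℝ × ℝ × ℝ → Octonion) (h1 : Continuous g1) (h2 : Continuous g2)
    (h3 : Continuous g3) (b1 : ∀ x, ‖g1 x‖ ≤ 2) (b2 : ∀ x, ‖g2 x‖ ≤ 2)
    (b3 : ∀ x, ‖g3 x‖ ≤ 2) :
    Integrable (fun x => omul (omul (omul (u x) (g1 x)) (g2 x)) (g3 x)) := by
  have m3 := omul_comp_aesm (omul_comp_aesm (omul_comp_aesm hu.aestronglyMeasurable h1) h2) h3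
  refine Integrable.mono' ((hu.norm.const_mul 64)) m3 ?_
  filter_upwards with x
  have hn0 : (0:ℝ) ≤ ‖u x‖ := norm_nonneg _
  have k1 : ‖omul (u x) (g1 x)‖ ≤ 4 * ‖u x‖ := by
    have := norm_omul_le (u x) (g1 x)
    nlinarith [b1 x, norm_nonneg (g1 x)]
  have k2 : ‖omul (omul (u x) (g1 x)) (g2 x)‖ ≤ 16 * ‖u x‖ := by
    have := norm_omul_le (omul (u x) (g1 x)) (g2 x)
    nlinarith [b2 x, norm_nonneg (g2 x), norm_nonneg (omul (u x) (g1 x))]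
  have := norm_omul_le (omul (omul (u x) (g1 x)) (g2 x)) (g3 x)
  nlinarith [b3 x, norm_nonneg (g3 x), norm_nonneg (omul (omul (u x) (g1 x)) (g2 x))]

/-- Right multiplication by `e1` as a continuous linear map. -/
def rmulE1 : Octonion →L[ℝ] Octonion :=
  LinearMap.mkContinuous
    { toFun := fun x => omul x e1
      map_add' := fun x y => omul_add_left x y e1
      map_smul' := fun a x => omul_smul_left a x e1 }
    2 (fun x => by simpa [norm_e1] using norm_omul_le x e1)

set_option maxHeartbeats 1000000 in
theorem OFT_sine_modulation (u : ℝ × ℝ × ℝ → Octonion) (hu : Integrable u)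
    (f₀ f₁ f₂ f₃ : ℝ) :
    OFT (fun x => Real.sin (2 * π * f₀ * x.1) • u x) (f₁, f₂, f₃) =
      (2 : ℝ)⁻¹ •
        omul (OFT u (f₁ + f₀, -f₂, -f₃) - OFT u (f₁ - f₀, -f₂, -f₃)) e1 := by
  have harg1 : ∀ r : ℝ, -(2*π*(f₁+f₀)*r) = -(2*π*f₁*r) - 2*π*f₀*r := fun r => by ring
  have harg2 : ∀ r : ℝ, -(2*π*(f₁-f₀)*r) = -(2*π*f₁*r) + 2*π*f₀*r := fun r => by ring
  have harg3 : ∀ r : ℝ, -(2*π*(-f₂)*r) = -(-(2*π*f₂*r)) := fun r => by ring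
  have harg4 : ∀ r : ℝ, -(2*π*(-f₃)*r) = -(-(2*π*f₃*r)) := fun r => by ring
  simp only [OFT, octExp_eq_Efac e1_sq, octExp_eq_Efac e2_sq, octExp_eq_Efac e4_sq,
    harg1, harg2, harg3, harg4]
  have hIp : Integrable (fun x : ℝ × ℝ × ℝ =>
      omul (omul (omul (u x) (Efac e1 (-(2*π*f₁*x.1) - 2*π*f₀*x.1)))
        (Efac e2 (-(-(2*π*f₂*x.2.1))))) (Efac e4 (-(-(2*π*f₃*x.2.2))))) :=
    integrable_triple hu _ _ _
      ((continuous_Efac e1).comp (by fun_prop)) ((continuous_Efac e2).comp (by fun_prop))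
      ((continuous_Efac e4).comp (by fun_prop))
      (fun x => norm_Efac_le norm_e1 _) (fun x => norm_Efac_le norm_e2 _)
      (fun x => norm_Efac_le norm_e4 _)
  have hIm : Integrable (fun x : ℝ × ℝ × ℝ =>
      omul (omul (omul (u x) (Efac e1 (-(2*π*f₁*x.1) + 2*π*f₀*x.1)))
        (Efac e2 (-(-(2*π*f₂*x.2.1))))) (Efac e4 (-(-(2*π*f₃*x.2.2))))) :=
    integrable_triple hu _ _ _
      ((continuous_Efac e1).comp (by fun_prop)) ((continuous_Efac e2).comp (by fun_prop))
      ((continuous_Efac e4).comp (by fun_prop))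
      (fun x => norm_Efac_le norm_e1 _) (fun x => norm_Efac_le norm_e2 _)
      (fun x => norm_Efac_le norm_e4 _)
  rw [integral_congr_ae (g := fun x : ℝ × ℝ × ℝ => (2:ℝ)⁻¹ • omul (
      (omul (omul (omul (u x) (Efac e1 (-(2*π*f₁*x.1) - 2*π*f₀*x.1)))
        (Efac e2 (-(-(2*π*f₂*x.2.1))))) (Efac e4 (-(-(2*π*f₃*x.2.2)))))
      - (omul (omul (omul (u x) (Efac e1 (-(2*π*f₁*x.1) + 2*π*f₀*x.1)))
        (Efac e2 (-(-(2*π*f₂*x.2.1))))) (Efac e4 (-(-(2*π*f₃*x.2.2)))))) e1)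
    (Filter.Eventually.of_forall fun x =>
      key (u x) (2*π*f₀*x.1) (-(2*π*f₁*x.1)) (-(2*π*f₂*x.2.1)) (-(2*π*f₃*x.2.2)))]
  rw [integral_smul]
  congr 1
  calc (∫ x : ℝ × ℝ × ℝ, omul (
      (omul (omul (omul (u x) (Efac e1 (-(2*π*f₁*x.1) - 2*π*f₀*x.1)))
        (Efac e2 (-(-(2*π*f₂*x.2.1))))) (Efac e4 (-(-(2*π*f₃*x.2.2)))))
      - (omul (omul (omul (u x) (Efac e1 (-(2*π*f₁*x.1) + 2*π*f₀*x.1)))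
        (Efac e2 (-(-(2*π*f₂*x.2.1))))) (Efac e4 (-(-(2*π*f₃*x.2.2)))))) e1)
      = ∫ x : ℝ × ℝ × ℝ, rmulE1 (
      (omul (omul (omul (u x) (Efac e1 (-(2*π*f₁*x.1) - 2*π*f₀*x.1)))
        (Efac e2 (-(-(2*π*f₂*x.2.1))))) (Efac e4 (-(-(2*π*f₃*x.2.2)))))
      - (omul (omul (omul (u x) (Efac e1 (-(2*π*f₁*x.1) + 2*π*f₀*x.1)))
        (Efac e2 (-(-(2*π*f₂*x.2.1))))) (Efac e4 (-(-(2*π*f₃*x.2.2)))))) := rfl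
    _ = rmulE1 (∫ x : ℝ × ℝ × ℝ,
      ((omul (omul (omul (u x) (Efac e1 (-(2*π*f₁*x.1) - 2*π*f₀*x.1)))
        (Efac e2 (-(-(2*π*f₂*x.2.1))))) (Efac e4 (-(-(2*π*f₃*x.2.2)))))
      - (omul (omul (omul (u x) (Efac e1 (-(2*π*f₁*x.1) + 2*π*f₀*x.1)))
        (Efac e2 (-(-(2*π*f₂*x.2.1))))) (Efac e4 (-(-(2*π*f₃*x.2.2))))))) :=
        ContinuousLinearMap.integral_comp_comm _ (hIp.sub hIm)
    _ = _ := by rw [integral_sub hIp hIm]; rfl
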